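/- arXiv:1208.2380 — 2 statements merged into one kernel-verified Lean document; each statement's English description precedes it below -/
import Mathlib

section
/- Let A be a group with normal subgroup B, and let G ≤ S_w act transitively on [1, w]. Then inside the wreath product A ≀ G, the intersection of the normalizer of B ≀ G with the base subgroup A^{×w} equals B^{×w} · ΔA, where ΔA = {(x, ..., x) : x ∈ A} is the diagonal subgroup. -/
noncomputable section
open Finset
attribute [local instance] Classical.propDecidable

/-- The permutation action of `Equiv.Perm ι` on `ι → L`, as a homomorphism to `MulAut`. -/
def permAut (L ι : Type*) [Group L] : Equiv.Perm ι →* MulAut (ι → L) where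
  toFun σ :=
    { toFun := fun f => f ∘ σ.symm
      invFun := fun f => f ∘ σ
      left_inv := by intro f; funext i; simp
      right_inv := by intro f; funext i; simp
      map_mul' := by intro f g; rfl }
  map_one' := by
    apply MulEquiv.ext; intro f; rfl
  map_mul' := by
    intro σ τ; apply MulEquiv.ext; intro f; rfl

/-- The wreath product `L ≀ S_ι`, realized as a semidirect product. -/
abbrev Wreath (L : Type*) [Group L] (ι : Type*) : Type _ :=
  (ι → L) ⋊[permAut L ι] Equiv.Perm ι

instance instFintypeSemidirectProduct {N G : Type*} [Group N] [Group G]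
    (φ : G →* MulAut N) [Fintype N] [Fintype G] : Fintype (N ⋊[φ] G) :=
  Fintype.ofEquiv (N × G)
    { toFun := fun p => ⟨p.1, p.2⟩
      invFun := fun g => (g.left, g.right)
      left_inv := fun p => rfl
      right_inv := fun g => rfl }

/-- `i` is the minimal representative ("smallest element of the support") of its
`σ`-cycle (fixed points included as marked cycles with singleton support). -/
def minRep {ι : Type*} [LinearOrder ι] (σ : Equiv.Perm ι) (i : ι) : Prop :=
  ∀ j, σ.SameCycle i j → i ≤ j

/-- The cycle product `z_i · z_{σ⁻¹ i} ⋯ z_{σ^{-(o-1)} i}` of the entries of `f` along the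
`σ`-cycle of `i` (`o` the length of the cycle of `i`). -/
def cycleProd {L ι : Type*} [Group L] (σ : Equiv.Perm ι) (f : ι → L) (i : ι) : L :=
  ((List.range (Function.minimalPeriod (⇑σ) i)).map fun k => f (((σ ^ k)⁻¹ : Equiv.Perm ι) i)).prod

/-- The class function `φ^{×̃ w}` on the wreath product: its value on an element
conjugate to `y_{σ_1}(x_1)⋯y_{σ_r}(x_r)` is `φ(x_1)⋯φ(x_r)`. -/
def tw {L ι : Type*} [Group L] [Fintype ι] [LinearOrder ι] (φ : L → ℂ)
    (g : Wreath L ι) : ℂ :=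
  ∏ i ∈ Finset.univ.filter (fun i => minRep g.right i),
    φ (cycleProd g.right g.left i)

/-- Induction of class functions from a subgroup. -/
def indCF {G : Type*} [Group G] [Fintype G] (H : Subgroup G) (ψ : ↥H → ℂ) : G → ℂ :=
  fun g => (Nat.card ↥H : ℂ)⁻¹ *
    ∑ x : G, if h : x⁻¹ * g * x ∈ H then ψ ⟨x⁻¹ * g * x, h⟩ else 0

/-- A virtual character: a difference of two (finite-dimensional complex) characters. -/
def IsVirtual {G : Type} [Group G] (f : G → ℂ) : Prop :=
  ∃ V W : FDRep ℂ G, ∀ g, f g = V.character g - W.character g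

/-- The bilinear inner product of class functions, `⟨f,h⟩ = |G|⁻¹ Σ_g f(g) h(g⁻¹)`. -/
def cfInner {G : Type*} [Group G] [Fintype G] (f h : G → ℂ) : ℂ :=
  (Fintype.card G : ℂ)⁻¹ * ∑ g : G, f g * h g⁻¹

/-- An irreducible (complex) character: a character of norm one. -/
def IsIrrChar {G : Type} [Group G] [Fintype G] (χ : G → ℂ) : Prop :=
  (∃ V : FDRep ℂ G, ∀ g, χ g = V.character g) ∧ cfInner χ χ = 1

/-- Restriction of a wreath-product element to an invariant set of positions. -/
def wrRestrict {L ι : Type*} [Group L] (g : Wreath L ι) (P : ι → Prop)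
    (h : ∀ i, P i ↔ P (g.right i)) : Wreath L {i // P i} :=
  ⟨fun i => g.left i.1, g.right.subtypePerm (fun i => (h i).symm)⟩

end

theorem stmt10_conj {A ι : Type*} [Group A] (g h : Wreath A ι) (hg : g.right = 1) :
    (g * h * g⁻¹).right = h.right ∧
    ∀ i, (g * h * g⁻¹).left i = g.left i * h.left i * (g.left (h.right⁻¹ i))⁻¹ := by
  constructor
  · simp [hg]
  · intro i
    simp [SemidirectProduct.mul_left, SemidirectProduct.inv_left, hg, permAut,
      Equiv.Perm.inv_def, mul_assoc, Equiv.Perm.one_symm]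

/-- Let `B ⊴ A` and let `G ≤ S_ι` act transitively on `ι`.  Inside the
wreath product `A ≀ G`, the intersection of the normalizer of `B ≀ G` with the base
subgroup `A^{×ι}` equals `B^{×ι} · ΔA`.  (An element of the base subgroup, i.e. with
trivial permutation part, lies in the normalizer iff its tuple of entries is a
`B`-tuple times a constant diagonal.) -/
theorem stmt10 {A : Type*} [Group A] {ι : Type*} [Fintype ι]
    (B : Subgroup A) (hB : B.Normal) (G : Subgroup (Equiv.Perm ι))
    (htrans : ∀ i j : ι, ∃ σ ∈ G, σ i = j)
    (BwrG : Subgroup (Wreath A ι))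
    (hBwrG : ∀ g : Wreath A ι, g ∈ BwrG ↔ ((∀ i, g.left i ∈ B) ∧ g.right ∈ G))
    (g : Wreath A ι) (hg : g.right = 1) :
    g ∈ Subgroup.normalizer BwrG ↔ ∃ x : A, ∀ i, g.left i * x⁻¹ ∈ B := by
  rw [Subgroup.mem_normalizer_iff]
  constructor
  · intro H
    by_cases hι : Nonempty ι
    · obtain ⟨i₀⟩ := hι
      refine ⟨g.left i₀, fun i => ?_⟩
      obtain ⟨σ, hσ, hσi⟩ := htrans (i₀ : ι) i
      have hmem : (⟨1, σ⟩ : Wreath A ι) ∈ BwrG := (hBwrG _).2 ⟨fun i => one_mem _, hσ⟩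
      have h2 := ((hBwrG _).1 ((H _).1 hmem)).1
      obtain ⟨hr, hl⟩ := stmt10_conj g ⟨1, σ⟩ hg
      have h3 := h2 (σ i₀)
      rw [hl (σ i₀)] at h3
      simp only [Equiv.Perm.inv_def, Equiv.symm_apply_apply] at h3
      simpa [hσi] using h3
    · exact ⟨1, fun i => absurd ⟨i⟩ hι⟩
  · rintro ⟨x, hx⟩ h
    obtain ⟨hr, hl⟩ := stmt10_conj g h hg
    rw [hBwrG, hBwrG]
    constructor
    · rintro ⟨hb, hs⟩
      refine ⟨fun i => ?_, hr ▸ hs⟩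
      rw [hl i]
      have key : g.left i * (g.left (h.right⁻¹ i))⁻¹ ∈ B := by
        have := mul_mem (hx i) (inv_mem (hx (h.right⁻¹ i)))
        simpa [mul_assoc] using this
      have : g.left i * h.left i * (g.left (h.right⁻¹ i))⁻¹ =
          (g.left i * h.left i * (g.left i)⁻¹) * (g.left i * (g.left (h.right⁻¹ i))⁻¹) := by
        group
      rw [this]
      exact mul_mem (hB.conj_mem _ (hb i) _) key
    · rintro ⟨hb, hs⟩
      refine ⟨fun i => ?_, by rwa [hr] at hs⟩
      have key : (g.left i)⁻¹ * (g.left (h.right⁻¹ i)) ∈ B := by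
        have := mul_mem (hx (h.right⁻¹ i)) (inv_mem (hx i))
        have h2 := hB.conj_mem _ this (g.left i)⁻¹
        simpa [mul_assoc] using h2
      have h3 := hb i
      rw [hl i] at h3
      have conj : (g.left i)⁻¹ * (g.left i * h.left i * (g.left (h.right⁻¹ i))⁻¹) *
          g.left i ∈ B := by
        simpa using hB.conj_mem _ h3 (g.left i)⁻¹
      have : h.left i = ((g.left i)⁻¹ * (g.left i * h.left i * (g.left (h.right⁻¹ i))⁻¹) *
          g.left i) * ((g.left i)⁻¹ * g.left (h.right⁻¹ i)) := by
        group
      rw [this]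
      exact mul_mem conj key
end

section
/- Let V_1, ..., V_r be finitely generated free abelian groups. For each i, let E_i be a subset of the dual V_i* = Hom(V_i, ℤ), and let f_i ∈ V_i* satisfy ker(f_i) ⊇ E_i^⊥ (the subgroup of V_i annihilated by all elements of E_i). If φ ∈ V_1 ⊗ ... ⊗ V_r is annihilated by every tensor f_1' ⊗ ... ⊗ f_r' with f_i' ∈ E_i, then (f_1 ⊗ ... ⊗ f_r)(φ) = 0. -/
open scoped TensorProduct

/-- The pairing of a tuple of `ℤ`-linear functionals `f i : V i →ₗ ℤ` with the tensor
product `V 1 ⊗ ⋯ ⊗ V r`, i.e. the functional `f 1 ⊗ ⋯ ⊗ f r` under the canonical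
identification of the dual of a tensor product. -/
noncomputable def tensorPairing {r : ℕ} (V : Fin r → Type*) [∀ i, AddCommGroup (V i)]
    [∀ i, Module ℤ (V i)] (f : ∀ i, Module.Dual ℤ (V i)) :
    PiTensorProduct ℤ V →ₗ[ℤ] ℤ :=
  PiTensorProduct.lift ((MultilinearMap.mkPiAlgebra ℤ (Fin r) ℤ).compLinearMap f)

/-- Key lemma: over a finite free `ℤ`-module, if `f` vanishes on `E^⊥`, then some nonzero
integer multiple of `f` lies in the `ℤ`-span of `E`. -/
lemma exists_int_smul_mem_span (V : Type*) [AddCommGroup V] [Module ℤ V]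
    [Module.Free ℤ V] [Module.Finite ℤ V]
    {E : Set (Module.Dual ℤ V)} {f : Module.Dual ℤ V}
    (hf : ∀ v : V, (∀ e ∈ E, e v = 0) → f v = 0) :
    ∃ n : ℤ, n ≠ 0 ∧ n • f ∈ Submodule.span ℤ E := by
  classical
  set ι := Module.Free.ChooseBasisIndex ℤ V with hι
  let b : Module.Basis ι ℤ V := Module.Free.chooseBasis ℤ V
  -- coordinates of a functional, as a rational vector
  let Φ : Module.Dual ℤ V →ₗ[ℤ] (ι → ℚ) :=
    { toFun := fun g j => (g (b j) : ℚ)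
      map_add' := by intro g h; funext j; simp
      map_smul' := by
        intro n g; funext j
        simp [zsmul_eq_mul] }
  have hΦinj : Function.Injective Φ := by
    intro g h hgh
    apply b.ext
    intro j
    have : ((g (b j) : ℚ)) = (h (b j) : ℚ) := congrFun hgh j
    exact_mod_cast this
  have key : Φ f ∈ Submodule.span ℚ (Φ '' E) := by
    rw [← Subspace.dualAnnihilator_dualCoannihilator_eq
      (W := Submodule.span ℚ (Φ '' E)), Submodule.mem_dualCoannihilator]
    intro ψ hψ
    rw [Submodule.mem_dualAnnihilator] at hψ
    set w : ι → ℚ := fun j => ψ (fun k => if j = k then 1 else 0) with hw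
    have hψ_eq : ∀ x : ι → ℚ, ψ x = ∑ j, x j * w j := by
      intro x
      rw [LinearMap.pi_apply_eq_sum_univ ψ x]
      simp [hw, smul_eq_mul]
    -- clear denominators of w
    obtain ⟨d, hd⟩ := IsLocalization.exist_integer_multiples_of_finite
      (nonZeroDivisors ℤ) w
    choose c hc using hd
    have hcq : ∀ j, (c j : ℚ) = (d : ℤ) • w j := hc
    set v : V := ∑ j, c j • b j with hv
    have hgv : ∀ g : Module.Dual ℤ V, g v = ∑ j, c j * g (b j) := by
      intro g
      rw [hv, map_sum]
      exact Finset.sum_congr rfl fun j _ => by simp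
    have hψΦ : ∀ g : Module.Dual ℤ V, ψ (Φ g) = ∑ j, (g (b j) : ℚ) * w j := by
      intro g; rw [hψ_eq]; rfl
    have hEv : ∀ e ∈ E, e v = 0 := by
      intro e he
      have h0 : ψ (Φ e) = 0 := hψ (Φ e) (Submodule.subset_span ⟨e, he, rfl⟩)
      rw [hψΦ] at h0
      have : ((e v : ℤ) : ℚ) = 0 := by
        rw [hgv e]
        push_cast
        calc ∑ j, (c j : ℚ) * (e (b j) : ℚ)
            = ∑ j, ((d : ℤ) • w j) * (e (b j) : ℚ) := by
              exact Finset.sum_congr rfl fun j _ => by rw [hcq]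
          _ = (d : ℤ) • ∑ j, (e (b j) : ℚ) * w j := by
              rw [Finset.smul_sum]
              exact Finset.sum_congr rfl fun j _ => by
                simp [zsmul_eq_mul]; ring
          _ = 0 := by rw [h0, smul_zero]
      exact_mod_cast this
    have hfv : f v = 0 := hf v hEv
    -- deduce ψ (Φ f) = 0
    have hd0 : ((d : ℤ) : ℚ) ≠ 0 := by
      have := nonZeroDivisors.coe_ne_zero d
      exact_mod_cast this
    have : ((d : ℤ) : ℚ) * ψ (Φ f) = 0 := by
      rw [hψΦ, Finset.mul_sum]
      calc ∑ j, ((d : ℤ) : ℚ) * ((f (b j) : ℚ) * w j)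
          = ∑ j, (c j : ℚ) * (f (b j) : ℚ) := by
            refine Finset.sum_congr rfl fun j _ => ?_
            rw [hcq]
            simp [zsmul_eq_mul]; ring
        _ = ((f v : ℤ) : ℚ) := by rw [hgv f]; push_cast; ring
        _ = 0 := by rw [hfv]; norm_num
    exact (mul_eq_zero.mp this).resolve_left hd0
  -- extract a finite rational combination and clear denominators
  rw [Submodule.mem_span_set] at key
  obtain ⟨cf, hsupp, hsum⟩ := key
  obtain ⟨n, hn⟩ := IsLocalization.exist_integer_multiples
    (nonZeroDivisors ℤ) cf.support (fun x => cf x)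
  choose D hD using hn
  -- pick preimages in E
  have hpre : ∀ x ∈ cf.support, ∃ e ∈ E, Φ e = x := by
    intro x hx
    obtain ⟨e, he, hex⟩ := hsupp hx
    exact ⟨e, he, hex⟩
  choose e he hΦe using hpre
  refine ⟨(n : ℤ), nonZeroDivisors.coe_ne_zero n, ?_⟩
  have hg : (n : ℤ) • f = ∑ x ∈ cf.support.attach, D x.1 x.2 • e x.1 x.2 := by
    apply hΦinj
    rw [map_sum, LinearMap.map_smul]
    have : (n : ℤ) • Φ f = ∑ x ∈ cf.support.attach, D x.1 x.2 • x.1 := by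
      rw [← hsum, Finsupp.sum, Finset.smul_sum,
        ← Finset.sum_attach cf.support (fun x => (n : ℤ) • (cf x • x))]
      refine Finset.sum_congr rfl fun x _ => ?_
      have hDx : ((D x.1 x.2 : ℤ) : ℚ) = (n : ℤ) • cf x.1 := by
        rw [← hD x.1 x.2]; simp
      rw [← Int.cast_smul_eq_zsmul ℚ (D x.1 x.2) (x.1 : ι → ℚ), hDx, smul_assoc]
    rw [this]
    exact Finset.sum_congr rfl fun x _ => by rw [LinearMap.map_smul, hΦe]
  rw [hg]
  exact Submodule.sum_mem _ fun x _ =>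
    Submodule.smul_mem _ _ (Submodule.subset_span (he x.1 x.2))

/-- Let `V 1, …, V r` be finitely generated free abelian groups,
`E i ⊆ (V i)*` and `f i ∈ (V i)*` with `ker (f i) ⊇ (E i)^⊥`.  If
`φ ∈ V 1 ⊗ ⋯ ⊗ V r` is annihilated by every `f' 1 ⊗ ⋯ ⊗ f' r` with `f' i ∈ E i`,
then `(f 1 ⊗ ⋯ ⊗ f r)(φ) = 0`. -/
theorem stmt11 {r : ℕ} (V : Fin r → Type*) [∀ i, AddCommGroup (V i)] [∀ i, Module ℤ (V i)]
    [∀ i, Module.Free ℤ (V i)] [∀ i, Module.Finite ℤ (V i)]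
    (E : ∀ i, Set (Module.Dual ℤ (V i))) (f : ∀ i, Module.Dual ℤ (V i))
    (hf : ∀ i, ∀ v : V i, (∀ e ∈ E i, e v = 0) → f i v = 0)
    (φ : PiTensorProduct ℤ V)
    (hφ : ∀ f' : ∀ i, Module.Dual ℤ (V i), (∀ i, f' i ∈ E i) → tensorPairing V f' φ = 0) :
    tensorPairing V f φ = 0 := by
  classical
  -- the pairing as a multilinear map in `f`
  let G : MultilinearMap ℤ (fun i => Module.Dual ℤ (V i)) ℤ :=
    ((LinearMap.applyₗ φ).comp (PiTensorProduct.lift :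
        MultilinearMap ℤ V ℤ ≃ₗ[ℤ] (PiTensorProduct ℤ V →ₗ[ℤ] ℤ)).toLinearMap).compMultilinearMap
      ((MultilinearMap.piLinearMap (MultilinearMap.mkPiAlgebra ℤ (Fin r) ℤ)))
  have hG : ∀ f' : ∀ i, Module.Dual ℤ (V i), G f' = tensorPairing V f' φ := by
    intro f'
    simp [G, tensorPairing, MultilinearMap.piLinearMap]
  -- G vanishes whenever each coordinate is in the span of E i
  have main : ∀ s : Finset (Fin r), ∀ x : ∀ i, Module.Dual ℤ (V i),
      (∀ i ∈ s, x i ∈ Submodule.span ℤ (E i)) → (∀ i ∉ s, x i ∈ E i) → G x = 0 := by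
    intro s
    induction s using Finset.induction_on with
    | empty =>
      intro x _ hx2
      rw [hG]
      exact hφ x fun i => hx2 i (Finset.notMem_empty i)
    | @insert j s hj IH =>
      intro x hx1 hx2
      have hxj : x j ∈ Submodule.span ℤ (E j) := hx1 j (Finset.mem_insert_self j s)
      have := Submodule.span_induction
        (p := fun y _ => G (Function.update x j y) = 0)
        (fun y hy => by
          apply IH
          · intro i hi
            rcases eq_or_ne i j with rfl | hij
            · exact absurd hi hj
            · rw [Function.update_of_ne hij]
              exact hx1 i (Finset.mem_insert_of_mem hi)
          · intro i hi
            rcases eq_or_ne i j with rfl | hij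
            · rw [Function.update_self]; exact hy
            · rw [Function.update_of_ne hij]
              exact hx2 i (by simp [hij, hi]))
        (by show G (Function.update x j 0) = 0; rw [G.map_update_zero])
        (fun a b _ _ ha hb => by
          show G (Function.update x j (a + b)) = 0
          rw [G.map_update_add]
          change G (Function.update x j a) + G (Function.update x j b) = 0
          rw [ha, hb, add_zero])
        (fun m a _ ha => by
          show G (Function.update x j (m • a)) = 0
          rw [G.map_update_smul]
          change m • G (Function.update x j a) = 0
          rw [ha, smul_zero])
        hxj
      rwa [Function.update_eq_self] at this
  choose n hn0 hnmem using fun i => exists_int_smul_mem_span (V i) (hf i)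
  have h0 : G (fun i => n i • f i) = 0 :=
    main Finset.univ _ (fun i _ => hnmem i) (fun i hi => absurd (Finset.mem_univ i) hi)
  rw [MultilinearMap.map_smul_univ] at h0
  rw [hG] at h0
  have hprod : (∏ i, n i) ≠ 0 := Finset.prod_ne_zero_iff.mpr fun i _ => hn0 i
  rw [smul_eq_mul] at h0
  exact (mul_eq_zero.mp h0).resolve_left hprod
end
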